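/- Let X be a 0-dimensional dense-in-itself metric space, I a non-empty countable set, and ε > 0. Then any non-empty open G ⊆ X can be partitioned into a non-empty set B and non-empty open sets G_i (i ∈ I) such that: (1) cl(G) \ ⋃_{i∈I} G_i = cl(B) = cl(G_i) \ G_i for each i ∈ I; (2) G ∩ d(B) = ∅; (3) d(x, B) < ε for every x ∈ G. -/

import Mathlib

open Metric Set

namespace Stmt10Aux

variable {X : Type*} [MetricSpace X]

noncomputable def w (t : ℕ) : ℝ := min ((2:ℝ)⁻¹ ^ t) ((2:ℝ)⁻¹ ^ (Nat.unpair t).1)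

lemma w_pos (t : ℕ) : 0 < w t := lt_min (by positivity) (by positivity)

lemma w_le (t : ℕ) : w t ≤ (2:ℝ)⁻¹ ^ t := min_le_left _ _
lemma w_le' (t : ℕ) : w t ≤ (2:ℝ)⁻¹ ^ (Nat.unpair t).1 := min_le_right _ _

lemma exists_net (R : Set X) {δ : ℝ} (hδ : 0 < δ) :
    ∃ N : Set X, N ⊆ R ∧ (∀ y ∈ N, ∀ y' ∈ N, y ≠ y' → δ ≤ dist y y') ∧
      ∀ q ∈ R, ∃ y ∈ N, dist q y < δ := by
  have hchains : ∀ c ⊆ {S : Set X | S ⊆ R ∧ ∀ y ∈ S, ∀ y' ∈ S, y ≠ y' → δ ≤ dist y y'},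
      IsChain (· ⊆ ·) c →
      ∃ ub ∈ {S : Set X | S ⊆ R ∧ ∀ y ∈ S, ∀ y' ∈ S, y ≠ y' → δ ≤ dist y y'},
        ∀ s ∈ c, s ⊆ ub := by
    intro c hc hchain
    refine ⟨⋃₀ c, ⟨sUnion_subset fun s hs => (hc hs).1, ?_⟩,
      fun s hs => subset_sUnion_of_mem hs⟩
    intro y hy y' hy' hne
    obtain ⟨s, hs, hys⟩ := hy
    obtain ⟨s', hs', hys'⟩ := hy'
    rcases hchain.total hs hs' with h | h
    · exact (hc hs').2 y (h hys) y' hys' hne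
    · exact (hc hs).2 y hys y' (h hys') hne
  obtain ⟨N, hN⟩ := zorn_subset
    {S : Set X | S ⊆ R ∧ ∀ y ∈ S, ∀ y' ∈ S, y ≠ y' → δ ≤ dist y y'} hchains
  · obtain ⟨hNR, hNsep⟩ := hN.prop
    refine ⟨N, hNR, hNsep, fun q hq => ?_⟩
    by_cases hqN : q ∈ N
    · exact ⟨q, hqN, by simpa using hδ⟩
    · by_contra hno
      push_neg at hno
      have hmem : insert q N ∈
          {S : Set X | S ⊆ R ∧ ∀ y ∈ S, ∀ y' ∈ S, y ≠ y' → δ ≤ dist y y'} := by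
        refine ⟨insert_subset hq hNR, ?_⟩
        intro y hy y' hy' hne
        rcases Set.mem_insert_iff.mp hy with h1 | h1
        · rcases Set.mem_insert_iff.mp hy' with h2 | h2
          · exact absurd (h1.trans h2.symm) hne
          · subst h1; exact hno y' h2
        · rcases Set.mem_insert_iff.mp hy' with h2 | h2
          · subst h2; rw [dist_comm]; exact hno y h1
          · exact hNsep y h1 y' h2 hne
      exact hqN (hN.2 hmem (subset_insert q N) (mem_insert q N))

open Classical in
noncomputable def step (U : Set X) (t : ℕ) (prevT : ℕ → Set X) : Set X × (X → Set X) :=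
  ⟨(exists_net {y | y ∈ U ∧ Metric.infDist y Uᶜ < w t ∧ ∀ m, m < t → y ∉ prevT m}
      (w_pos t)).choose,
   fun y =>
    if h : ∃ V : Set X, IsClopen V ∧ y ∈ V ∧ V ⊆ Metric.ball y (w t / 8) ∩ U ∧
        ∀ m, m < t → Disjoint V (prevT m) then h.choose else ∅⟩

noncomputable def sys (U : Set X) : ℕ → Set X × (X → Set X)
  | t => step U t fun m => if h : m < t then ⋃ y ∈ (sys U m).1, (sys U m).2 y else ∅
termination_by t => t

noncomputable def net (U : Set X) (t : ℕ) : Set X := (sys U t).1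
noncomputable def seed (U : Set X) (t : ℕ) (y : X) : Set X := (sys U t).2 y
noncomputable def T (U : Set X) (t : ℕ) : Set X := ⋃ y ∈ net U t, seed U t y

lemma sys_eq (U : Set X) (t : ℕ) :
    sys U t = step U t fun m => if _ : m < t then T U m else ∅ := by
  rw [sys]
  rfl

def Reg (U : Set X) (t : ℕ) : Set X :=
  {y | y ∈ U ∧ Metric.infDist y Uᶜ < w t ∧ ∀ m, m < t → y ∉ T U m}

lemma net_spec (U : Set X) (t : ℕ) :
    net U t ⊆ Reg U t ∧
      (∀ y ∈ net U t, ∀ y' ∈ net U t, y ≠ y' → w t ≤ dist y y') ∧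
      ∀ q ∈ Reg U t, ∃ y ∈ net U t, dist q y < w t := by
  have hset : {y : X | y ∈ U ∧ Metric.infDist y Uᶜ < w t ∧
      ∀ m, m < t → y ∉ (if _ : m < t then T U m else ∅)} = Reg U t := by
    ext y
    simp only [Reg, mem_setOf_eq]
    constructor
    · rintro ⟨h1, h2, h3⟩
      exact ⟨h1, h2, fun m hm => by have := h3 m hm; rwa [dif_pos hm] at this⟩
    · rintro ⟨h1, h2, h3⟩
      exact ⟨h1, h2, fun m hm => by rw [dif_pos hm]; exact h3 m hm⟩
  have hspec := (exists_net ({y : X | y ∈ U ∧ Metric.infDist y Uᶜ < w t ∧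
      ∀ m, m < t → y ∉ (if _ : m < t then T U m else ∅)}) (w_pos t)).choose_spec
  have hnet : net U t = (exists_net ({y : X | y ∈ U ∧ Metric.infDist y Uᶜ < w t ∧
      ∀ m, m < t → y ∉ (if _ : m < t then T U m else ∅)}) (w_pos t)).choose := by
    rw [net, sys_eq]; rfl
  rw [hnet]
  refine ⟨fun x hx => hset ▸ hspec.1 hx, hspec.2.1, fun q hq => hspec.2.2 q (hset.symm ▸ hq)⟩

open Classical in
lemma seed_spec (U : Set X) (t : ℕ) (y : X)
    (h : ∃ V : Set X, IsClopen V ∧ y ∈ V ∧ V ⊆ Metric.ball y (w t / 8) ∩ U ∧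
        ∀ m, m < t → Disjoint V (T U m)) :
    IsClopen (seed U t y) ∧ y ∈ seed U t y ∧ seed U t y ⊆ Metric.ball y (w t / 8) ∩ U ∧
      ∀ m, m < t → Disjoint (seed U t y) (T U m) := by
  have h' : ∃ V : Set X, IsClopen V ∧ y ∈ V ∧ V ⊆ Metric.ball y (w t / 8) ∩ U ∧
      ∀ m, m < t → Disjoint V ((fun m => if _ : m < t then T U m else ∅) m) := by
    obtain ⟨V, h1, h2, h3, h4⟩ := h
    exact ⟨V, h1, h2, h3, fun m hm => by simpa only [dif_pos hm] using h4 m hm⟩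
  have hseed : seed U t y = h'.choose := by
    rw [seed, sys_eq]
    simp only [step]
    rw [dif_pos h']
  obtain ⟨h1, h2, h3, h4⟩ := h'.choose_spec
  rw [hseed]
  exact ⟨h1, h2, h3, fun m hm => by simpa only [dif_pos hm] using h4 m hm⟩

lemma good (U : Set X) (hU : IsOpen U)
    (h0 : ∀ x : X, ∀ O ∈ nhds x, ∃ V : Set X, IsClopen V ∧ x ∈ V ∧ V ⊆ O) (t : ℕ) :
    (∀ y ∈ net U t, IsClopen (seed U t y) ∧ y ∈ seed U t y ∧
      seed U t y ⊆ Metric.ball y (w t / 8) ∩ U ∧ ∀ m, m < t → Disjoint (seed U t y) (T U m)) ∧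
    IsClosed (T U t) := by
  induction t using Nat.strong_induction_on with
  | _ t ih =>
    have hns := net_spec U t
    have hseedspec : ∀ y ∈ net U t, IsClopen (seed U t y) ∧ y ∈ seed U t y ∧
        seed U t y ⊆ Metric.ball y (w t / 8) ∩ U ∧
        ∀ m, m < t → Disjoint (seed U t y) (T U m) := by
      intro y hy
      have hyR := hns.1 hy
      refine seed_spec U t y ?_
      have hOopen : IsOpen (Metric.ball y (w t / 8) ∩ U ∩
          ⋂ m ∈ Finset.range t, (T U m)ᶜ) :=
        ((isOpen_ball).inter hU).inter
          (isOpen_biInter_finset fun m hm => (ih m (Finset.mem_range.mp hm)).2.isOpen_compl)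
      have hyO : y ∈ Metric.ball y (w t / 8) ∩ U ∩ ⋂ m ∈ Finset.range t, (T U m)ᶜ := by
        refine ⟨⟨Metric.mem_ball_self (by have := w_pos t; linarith), hyR.1⟩, ?_⟩
        simp only [mem_iInter, Finset.mem_range, mem_compl_iff]
        exact fun m hm => hyR.2.2 m hm
      obtain ⟨V, hV1, hV2, hV3⟩ := h0 y _ (hOopen.mem_nhds hyO)
      refine ⟨V, hV1, hV2, fun z hz => (hV3 hz).1, fun m hm => disjoint_left.mpr ?_⟩
      intro z hz hz'
      have := (hV3 hz).2
      simp only [mem_iInter, Finset.mem_range, mem_compl_iff] at this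
      exact this m hm hz'
    refine ⟨hseedspec, ?_⟩
    refine isClosed_of_closure_subset fun z hz => ?_
    obtain ⟨v, hvT, hvz⟩ := Metric.mem_closure_iff.mp hz (w t / 4)
      (by have := w_pos t; linarith)
    obtain ⟨y₀, hy₀, hv⟩ := by
      simpa only [T, mem_iUnion, exists_prop] using hvT
    have hsub : Metric.ball z (w t / 4) ∩ T U t ⊆ seed U t y₀ := by
      rintro v' ⟨hv'ball, hv'T⟩
      obtain ⟨y', hy', hv'⟩ := by
        simpa only [T, mem_iUnion, exists_prop] using hv'T
      by_cases hyy : y' = y₀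
      · subst hyy; exact hv'
      · exfalso
        have h1 : dist v y₀ < w t / 8 := Metric.mem_ball.mp ((hseedspec y₀ hy₀).2.2.1 hv).1
        have h2 : dist v' y' < w t / 8 := Metric.mem_ball.mp ((hseedspec y' hy').2.2.1 hv').1
        have hsep : w t ≤ dist y' y₀ := hns.2.1 y' hy' y₀ hy₀ hyy
        have hb : dist v' z < w t / 4 := Metric.mem_ball.mp hv'ball
        have t1 : dist y' y₀ ≤ dist y' v' + dist v' z + dist z v + dist v y₀ := by
          have a1 : dist y' y₀ ≤ dist y' v' + dist v' y₀ := dist_triangle _ _ _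
          have a2 : dist v' y₀ ≤ dist v' z + dist z y₀ := dist_triangle _ _ _
          have a3 : dist z y₀ ≤ dist z v + dist v y₀ := dist_triangle _ _ _
          linarith
        rw [dist_comm y' v'] at t1
        have hw := w_pos t
        linarith
    have hz2 : z ∈ closure (Metric.ball z (w t / 4) ∩ T U t) :=
      (isOpen_ball).inter_closure ⟨Metric.mem_ball_self (by have := w_pos t; linarith), hz⟩
    have hz3 : z ∈ seed U t y₀ := by
      have := closure_mono hsub hz2
      rwa [(hseedspec y₀ hy₀).1.isClosed.closure_eq] at this
    exact mem_biUnion hy₀ hz3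

lemma T_open (U : Set X) (hU : IsOpen U)
    (h0 : ∀ x : X, ∀ O ∈ nhds x, ∃ V : Set X, IsClopen V ∧ x ∈ V ∧ V ⊆ O) (t : ℕ) :
    IsOpen (T U t) :=
  isOpen_biUnion fun y hy => ((good U hU h0 t).1 y hy).1.isOpen

lemma T_subset (U : Set X) (hU : IsOpen U)
    (h0 : ∀ x : X, ∀ O ∈ nhds x, ∃ V : Set X, IsClopen V ∧ x ∈ V ∧ V ⊆ O) (t : ℕ) :
    T U t ⊆ U := by
  intro z hz
  obtain ⟨y, hy, hzy⟩ := by simpa only [T, mem_iUnion, exists_prop] using hz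
  exact (((good U hU h0 t).1 y hy).2.2.1 hzy).2

lemma T_disj (U : Set X) (hU : IsOpen U)
    (h0 : ∀ x : X, ∀ O ∈ nhds x, ∃ V : Set X, IsClopen V ∧ x ∈ V ∧ V ⊆ O)
    {s t : ℕ} (hst : s < t) : Disjoint (T U t) (T U s) := by
  rw [Set.disjoint_left]
  intro z hz hz'
  obtain ⟨y, hy, hzy⟩ := by simpa only [T, mem_iUnion, exists_prop] using hz
  exact Set.disjoint_left.mp (((good U hU h0 t).1 y hy).2.2.2 s hst) hzy hz'

lemma T_near (U : Set X) (hU : IsOpen U)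
    (h0 : ∀ x : X, ∀ O ∈ nhds x, ∃ V : Set X, IsClopen V ∧ x ∈ V ∧ V ⊆ O) (t : ℕ) :
    ∀ z ∈ T U t, Metric.infDist z Uᶜ ≤ 2 * (2:ℝ)⁻¹ ^ t := by
  intro z hz
  obtain ⟨y, hy, hzy⟩ := by simpa only [T, mem_iUnion, exists_prop] using hz
  have h1 : dist z y < w t / 8 := Metric.mem_ball.mp (((good U hU h0 t).1 y hy).2.2.1 hzy).1
  have h2 : Metric.infDist y Uᶜ < w t := ((net_spec U t).1 hy).2.1
  have h3 : Metric.infDist z Uᶜ ≤ Metric.infDist y Uᶜ + dist z y :=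
    Metric.infDist_le_infDist_add_dist
  have h4 := w_le t
  have h5 := w_pos t
  linarith

def Sel (U : Set X) (P : ℕ → Prop) : Set X := ⋃ t ∈ {t | P t}, T U t

lemma mem_sel {U : Set X} {P : ℕ → Prop} {z : X} :
    z ∈ Sel U P ↔ ∃ t, P t ∧ z ∈ T U t := by
  simp [Sel]

lemma sel_open (U : Set X) (hU : IsOpen U)
    (h0 : ∀ x : X, ∀ O ∈ nhds x, ∃ V : Set X, IsClopen V ∧ x ∈ V ∧ V ⊆ O) (P : ℕ → Prop) :
    IsOpen (Sel U P) :=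
  isOpen_biUnion fun t _ => T_open U hU h0 t

lemma sel_subset (U : Set X) (hU : IsOpen U)
    (h0 : ∀ x : X, ∀ O ∈ nhds x, ∃ V : Set X, IsClopen V ∧ x ∈ V ∧ V ⊆ O) (P : ℕ → Prop) :
    Sel U P ⊆ U := by
  intro z hz
  obtain ⟨t, _, hzT⟩ := mem_sel.mp hz
  exact T_subset U hU h0 t hzT

open Classical in
lemma sel_closure_inter (U : Set X) (hU : IsOpen U)
    (h0 : ∀ x : X, ∀ O ∈ nhds x, ∃ V : Set X, IsClopen V ∧ x ∈ V ∧ V ⊆ O)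
    (hc : Uᶜ.Nonempty) (P : ℕ → Prop) :
    closure (Sel U P) ∩ U ⊆ Sel U P := by
  rintro z ⟨hzc, hzU⟩
  have hzUc : z ∉ Uᶜ := by simpa using hzU
  have hD : 0 < Metric.infDist z Uᶜ :=
    (hU.isClosed_compl.notMem_iff_infDist_pos hc).mp hzUc
  obtain ⟨n₀, hn₀⟩ := exists_pow_lt_of_lt_one
    (by linarith : (0:ℝ) < Metric.infDist z Uᶜ / 4) (by norm_num : (2:ℝ)⁻¹ < 1)
  have hWclosed : IsClosed (⋃ t ∈ Finset.range n₀, (if P t then T U t else ∅)) := by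
    refine Set.Finite.isClosed_biUnion (Finset.finite_toSet _) (fun t _ => ?_)
    split
    · exact (good U hU h0 t).2
    · exact isClosed_empty
  have hWsub : (⋃ t ∈ Finset.range n₀, (if P t then T U t else ∅)) ⊆ Sel U P := by
    intro v hv
    simp only [mem_iUnion, exists_prop] at hv
    obtain ⟨t, _, hvt⟩ := hv
    by_cases hPt : P t
    · rw [if_pos hPt] at hvt; exact mem_sel.mpr ⟨t, hPt, hvt⟩
    · rw [if_neg hPt] at hvt; exact absurd hvt (notMem_empty v)
  have hsub : Metric.ball z (Metric.infDist z Uᶜ / 2) ∩ Sel U P ⊆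
      ⋃ t ∈ Finset.range n₀, (if P t then T U t else ∅) := by
    rintro v ⟨hvball, hvSel⟩
    obtain ⟨t, hPt, hvT⟩ := mem_sel.mp hvSel
    have h1 : Metric.infDist z Uᶜ ≤ Metric.infDist v Uᶜ + dist z v :=
      Metric.infDist_le_infDist_add_dist
    have h2 : Metric.infDist v Uᶜ ≤ 2 * (2:ℝ)⁻¹ ^ t := T_near U hU h0 t v hvT
    have hvb : dist v z < Metric.infDist z Uᶜ / 2 := Metric.mem_ball.mp hvball
    rw [dist_comm] at hvb
    have h3 : Metric.infDist z Uᶜ / 4 ≤ (2:ℝ)⁻¹ ^ t := by linarith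
    have htn : t < n₀ := by
      by_contra hh
      push_neg at hh
      have := pow_le_pow_of_le_one (by norm_num : (0:ℝ) ≤ 2⁻¹) (by norm_num) hh
      linarith
    simp only [mem_iUnion, exists_prop]
    exact ⟨t, Finset.mem_range.mpr htn, by rw [if_pos hPt]; exact hvT⟩
  have hz2 : z ∈ closure (Metric.ball z (Metric.infDist z Uᶜ / 2) ∩ Sel U P) :=
    (isOpen_ball).inter_closure ⟨Metric.mem_ball_self (by linarith), hzc⟩
  exact hWsub (hWclosed.closure_subset (closure_mono hsub hz2))

lemma gap (U : Set X) (hU : IsOpen U)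
    (h0 : ∀ x : X, ∀ O ∈ nhds x, ∃ V : Set X, IsClopen V ∧ x ∈ V ∧ V ⊆ O)
    {p : X} (hp : p ∉ U) (t : ℕ) :
    ∃ η > 0, ∀ m, m < t → ∀ v ∈ T U m, η ≤ dist p v := by
  induction t with
  | zero => exact ⟨1, one_pos, fun m hm => absurd hm (Nat.not_lt_zero m)⟩
  | succ t ih =>
    obtain ⟨η, hη, H⟩ := ih
    by_cases hne : (T U t).Nonempty
    · have hcl := (good U hU h0 t).2
      have hpT : p ∉ T U t := fun h => hp (T_subset U hU h0 t h)
      have hd : 0 < Metric.infDist p (T U t) :=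
        (hcl.notMem_iff_infDist_pos hne).mp hpT
      refine ⟨min η (Metric.infDist p (T U t)), lt_min hη hd, ?_⟩
      intro m hm v hv
      rcases Nat.lt_succ_iff_lt_or_eq.mp hm with h | h
      · exact le_trans (min_le_left _ _) (H m h v hv)
      · subst h
        exact le_trans (min_le_right _ _) (Metric.infDist_le_dist_of_mem hv)
    · refine ⟨η, hη, ?_⟩
      intro m hm v hv
      rcases Nat.lt_succ_iff_lt_or_eq.mp hm with h | h
      · exact H m h v hv
      · subst h; exact absurd ⟨v, hv⟩ hne

lemma cling (U : Set X) (hU : IsOpen U)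
    (h0 : ∀ x : X, ∀ O ∈ nhds x, ∃ V : Set X, IsClopen V ∧ x ∈ V ∧ V ⊆ O)
    {p : X} (hpU : p ∉ U) (hpcl : p ∈ closure U)
    (k : ℕ) {δ : ℝ} (hδ : 0 < δ) :
    ∃ t, (Nat.unpair t).2 = k ∧ ∃ z ∈ T U t, dist p z < δ := by
  obtain ⟨n, hn⟩ := exists_pow_lt_of_lt_one (half_pos hδ) (by norm_num : (2:ℝ)⁻¹ < 1)
  have ht2 : (Nat.unpair (Nat.pair n k)).2 = k := by rw [Nat.unpair_pair]
  have ht1 : (Nat.unpair (Nat.pair n k)).1 = n := by rw [Nat.unpair_pair]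
  set t := Nat.pair n k with htdef
  obtain ⟨η, hη, H⟩ := gap U hU h0 hpU t
  have hr : 0 < min η (min (δ/2) (w t)) := lt_min hη (lt_min (half_pos hδ) (w_pos t))
  obtain ⟨q, hqU, hpq⟩ := Metric.mem_closure_iff.mp hpcl _ hr
  have hq1 : q ∈ Reg U t := by
    refine ⟨hqU, ?_, ?_⟩
    · have e1 : Metric.infDist q Uᶜ ≤ dist q p :=
        Metric.infDist_le_dist_of_mem (by simpa using hpU)
      rw [dist_comm] at e1
      have e2 : min η (min (δ/2) (w t)) ≤ w t :=
        le_trans (min_le_right _ _) (min_le_right _ _)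
      linarith
    · intro m hm hqT
      have e1 := H m hm q hqT
      have e2 : min η (min (δ/2) (w t)) ≤ η := min_le_left _ _
      linarith
  obtain ⟨y, hyN, hqy⟩ := (net_spec U t).2.2 q hq1
  have hyT : y ∈ T U t := mem_biUnion hyN ((good U hU h0 t).1 y hyN).2.1
  refine ⟨t, ht2, y, hyT, ?_⟩
  have e3 : dist p y ≤ dist p q + dist q y := dist_triangle _ _ _
  have e4 : min η (min (δ/2) (w t)) ≤ δ/2 :=
    le_trans (min_le_right _ _) (min_le_left _ _)
  have e5 : w t ≤ (2:ℝ)⁻¹ ^ n := by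
    have := w_le' t
    rwa [ht1] at this
  linarith

end Stmt10Aux

section MainTheorem
open Metric Set

/-- In a 0-dimensional dense-in-itself metric space, any non-empty open `G` can be
partitioned into a non-empty set `B` and non-empty open sets `Gs i` (`i ∈ I`) with
the listed boundary, derived-set, and distance properties. -/
theorem stmt_10 {X : Type*} [MetricSpace X] [PerfectSpace X]
    (h0 : ∀ x : X, ∀ U ∈ nhds x, ∃ V : Set X, IsClopen V ∧ x ∈ V ∧ V ⊆ U)
    (I : Type*) [Countable I] [Nonempty I] {ε : ℝ} (hε : 0 < ε)
    {G : Set X} (hG : IsOpen G) (hGne : G.Nonempty) :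
    ∃ (B : Set X) (Gs : I → Set X),
      B.Nonempty ∧ (∀ i, IsOpen (Gs i) ∧ (Gs i).Nonempty) ∧
      Pairwise (Function.onFun Disjoint Gs) ∧ (∀ i, Disjoint B (Gs i)) ∧
      (B ∪ ⋃ i, Gs i) = G ∧
      closure G \ (⋃ i, Gs i) = closure B ∧
      (∀ i, closure B = closure (Gs i) \ Gs i) ∧
      G ∩ derivedSet B = ∅ ∧
      (∀ x ∈ G, Metric.infDist x B < ε) := by
  classical
  obtain ⟨f, hf⟩ := exists_surjective_nat I
  obtain ⟨x₀, hx₀⟩ := hGne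
  set σ : X → ℝ := fun x => if Gᶜ.Nonempty then min (ε/3) (Metric.infDist x Gᶜ / 4) else ε/3
    with hσdef
  have hσε : ∀ x, σ x ≤ ε/3 := by
    intro x
    by_cases hc : Gᶜ.Nonempty
    · simp only [hσdef, if_pos hc]; exact min_le_left _ _
    · simp only [hσdef, if_neg hc]; exact le_refl _
  have hσbd : ∀ x, Gᶜ.Nonempty → σ x ≤ Metric.infDist x Gᶜ / 4 := by
    intro x hc; simp only [hσdef, if_pos hc]; exact min_le_right _ _
  have hσpos : ∀ x ∈ G, 0 < σ x := by
    intro x hx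
    by_cases hc : Gᶜ.Nonempty
    · simp only [hσdef, if_pos hc]
      refine lt_min (by linarith) ?_
      have : 0 < Metric.infDist x Gᶜ :=
        (hG.isClosed_compl.notMem_iff_infDist_pos hc).mp (by simpa using hx)
      linarith
    · simp only [hσdef, if_neg hc]; linarith
  have hσlip : ∀ x y : X, dist x y ≤ σ x / 4 → σ x / 2 ≤ σ y := by
    intro x y hxy
    by_cases hc : Gᶜ.Nonempty
    · simp only [hσdef, if_pos hc] at hxy ⊢
      have e1 : Metric.infDist x Gᶜ ≤ Metric.infDist y Gᶜ + dist x y :=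
        Metric.infDist_le_infDist_add_dist
      have e2 : min (ε/3) (Metric.infDist x Gᶜ / 4) ≤ Metric.infDist x Gᶜ / 4 :=
        min_le_right _ _
      have e3 : min (ε/3) (Metric.infDist x Gᶜ / 4) ≤ ε/3 := min_le_left _ _
      have e4 : 0 ≤ Metric.infDist x Gᶜ := Metric.infDist_nonneg
      refine le_min (by linarith) ?_
      linarith
    · simp only [hσdef, if_neg hc]; linarith
  -- choose a maximal separated net B
  have hchains : ∀ c ⊆ {S : Set X | S ⊆ G ∧
        ∀ b ∈ S, ∀ b' ∈ S, b ≠ b' → min (σ b) (σ b') / 2 ≤ dist b b'},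
      IsChain (· ⊆ ·) c →
      c.Nonempty →
      ∃ ub ∈ {S : Set X | S ⊆ G ∧
        ∀ b ∈ S, ∀ b' ∈ S, b ≠ b' → min (σ b) (σ b') / 2 ≤ dist b b'},
        ∀ s ∈ c, s ⊆ ub := by
    intro c hc hchain _
    refine ⟨⋃₀ c, ⟨sUnion_subset fun s hs => (hc hs).1, ?_⟩,
      fun s hs => subset_sUnion_of_mem hs⟩
    intro b hb b' hb' hne
    obtain ⟨s, hs, hbs⟩ := hb
    obtain ⟨s', hs', hbs'⟩ := hb'
    rcases hchain.total hs hs' with h | h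
    · exact (hc hs').2 b (h hbs) b' hbs' hne
    · exact (hc hs).2 b hbs b' (h hbs') hne
  have hsing : {x₀} ∈ {S : Set X | S ⊆ G ∧
      ∀ b ∈ S, ∀ b' ∈ S, b ≠ b' → min (σ b) (σ b') / 2 ≤ dist b b'} := by
    refine ⟨by simpa using hx₀, ?_⟩
    intro b hb b' hb' hne
    rw [mem_singleton_iff] at hb hb'
    exact absurd (hb.trans hb'.symm) hne
  obtain ⟨B, hx₀B, hBmax⟩ := zorn_subset_nonempty _ hchains {x₀} hsing
  have hBG : B ⊆ G := hBmax.prop.1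
  have hBsep : ∀ b ∈ B, ∀ b' ∈ B, b ≠ b' → min (σ b) (σ b') / 2 ≤ dist b b' := hBmax.prop.2
  have hBne : B.Nonempty := ⟨x₀, hx₀B rfl⟩
  have hBnear : ∀ x ∈ G, x ∉ B → ∃ b ∈ B, dist x b < min (σ x) (σ b) / 2 := by
    intro x hx hxB
    by_contra hno
    push_neg at hno
    have hmem : insert x B ∈ {S : Set X | S ⊆ G ∧
        ∀ b ∈ S, ∀ b' ∈ S, b ≠ b' → min (σ b) (σ b') / 2 ≤ dist b b'} := by
      refine ⟨insert_subset hx hBG, ?_⟩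
      intro b hb b' hb' hne
      rcases Set.mem_insert_iff.mp hb with h1 | h1
      · rcases Set.mem_insert_iff.mp hb' with h2 | h2
        · exact absurd (h1.trans h2.symm) hne
        · subst h1; exact hno b' h2
      · rcases Set.mem_insert_iff.mp hb' with h2 | h2
        · subst h2
          rw [dist_comm, min_comm]
          exact hno b h1
        · exact hBsep b h1 b' h2 hne
    exact hxB (hBmax.2 hmem (subset_insert x B) (mem_insert x B))
  have honept : ∀ x ∈ G, ∀ b ∈ B, ∀ b' ∈ B,
      dist x b < σ x / 8 → dist x b' < σ x / 8 → b = b' := by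
    intro x hx b hb b' hb' h1 h2
    by_contra hne
    have hσx := hσpos x hx
    have l1 : σ x / 2 ≤ σ b := hσlip x b (by linarith)
    have l2 : σ x / 2 ≤ σ b' := hσlip x b' (by linarith)
    have l3 := hBsep b hb b' hb' hne
    have l4 : dist b b' ≤ dist b x + dist x b' := dist_triangle _ _ _
    rw [dist_comm b x] at l4
    have l5 : σ x / 2 ≤ min (σ b) (σ b') := le_min l1 l2
    linarith
  have hBci : ∀ z ∈ G, z ∉ B → z ∉ closure B := by
    intro z hz hzB hcl
    have hσz := hσpos z hz
    obtain ⟨b₁, hb₁B, hd₁⟩ := Metric.mem_closure_iff.mp hcl (σ z / 8) (by linarith)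
    have hd₁pos : 0 < dist z b₁ := dist_pos.mpr (fun h => hzB (h ▸ hb₁B))
    obtain ⟨b₂, hb₂B, hd₂⟩ := Metric.mem_closure_iff.mp hcl (min (σ z / 8) (dist z b₁))
      (lt_min (by linarith) hd₁pos)
    have hne : b₂ ≠ b₁ := by
      intro h
      subst h
      exact absurd (lt_of_lt_of_le hd₂ (min_le_right _ _)) (lt_irrefl _)
    exact hne (honept z hz b₂ hb₂B b₁ hb₁B (lt_of_lt_of_le hd₂ (min_le_left _ _)) hd₁)
  have hBd : G ∩ derivedSet B = ∅ := by
    ext x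
    simp only [mem_inter_iff, mem_empty_iff_false, iff_false, not_and]
    intro hx hacc
    rw [mem_derivedSet, accPt_iff_nhds] at hacc
    have hσx := hσpos x hx
    obtain ⟨y₁, ⟨hy₁b, hy₁B⟩, hy₁x⟩ := hacc (Metric.ball x (σ x / 8))
      (Metric.ball_mem_nhds x (by linarith))
    have hxy₁ : dist x y₁ < σ x / 8 := by
      have := Metric.mem_ball.mp hy₁b; rwa [dist_comm] at this
    have hd₁pos : 0 < dist x y₁ := dist_pos.mpr (Ne.symm hy₁x)
    obtain ⟨y₂, ⟨hy₂b, hy₂B⟩, hy₂x⟩ := hacc (Metric.ball x (min (σ x / 8) (dist x y₁)))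
      (Metric.ball_mem_nhds x (lt_min (by linarith) hd₁pos))
    have hxy₂ : dist x y₂ < min (σ x / 8) (dist x y₁) := by
      have := Metric.mem_ball.mp hy₂b; rwa [dist_comm] at this
    have hne : y₂ ≠ y₁ := by
      intro h
      subst h
      exact absurd (lt_of_lt_of_le hxy₂ (min_le_right _ _)) (lt_irrefl _)
    exact hne (honept x hx y₂ hy₂B y₁ hy₁B (lt_of_lt_of_le hxy₂ (min_le_left _ _)) hxy₁)
  have hinfB : ∀ x ∈ G, Metric.infDist x B < ε := by
    intro x hx
    by_cases hxB : x ∈ B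
    · rw [Metric.infDist_zero_of_mem hxB]; exact hε
    · obtain ⟨b, hbB, hd⟩ := hBnear x hx hxB
      have h1 : Metric.infDist x B ≤ dist x b := Metric.infDist_le_dist_of_mem hbB
      have h2 : min (σ x) (σ b) ≤ σ x := min_le_left _ _
      have h3 := hσε x
      linarith
  have hBbd : ∀ p, p ∈ closure G → p ∉ G → p ∈ closure B := by
    intro p hpc hpG
    have hc : Gᶜ.Nonempty := ⟨p, hpG⟩
    rw [Metric.mem_closure_iff]
    intro δ hδ
    obtain ⟨y, hyG, hpy⟩ := Metric.mem_closure_iff.mp hpc (δ/2) (half_pos hδ)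
    by_cases hyB : y ∈ B
    · exact ⟨y, hyB, by linarith⟩
    · obtain ⟨b, hbB, hd⟩ := hBnear y hyG hyB
      refine ⟨b, hbB, ?_⟩
      have e0 : Metric.infDist y Gᶜ ≤ dist y p := Metric.infDist_le_dist_of_mem hpG
      have e1 : σ y ≤ Metric.infDist y Gᶜ / 4 := hσbd y hc
      have e2 : min (σ y) (σ b) ≤ σ y := min_le_left _ _
      have e3 : dist p b ≤ dist p y + dist y b := dist_triangle _ _ _
      rw [dist_comm y p] at e0
      linarith
  have hclB : closure B = B ∪ (closure G \ G) := by
    apply Subset.antisymm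
    · intro z hz
      have hzG : z ∈ closure G := closure_mono hBG hz
      by_cases h : z ∈ G
      · left
        by_contra hzB
        exact hBci z h hzB hz
      · exact Or.inr ⟨hzG, h⟩
    · rintro z (hz | ⟨h1, h2⟩)
      · exact subset_closure hz
      · exact hBbd z h1 h2
  set U : Set X := G \ B with hUdef
  have hUsub : U ⊆ G := diff_subset
  have hUeq : U = G ∩ (closure B)ᶜ := by
    apply Subset.antisymm
    · rintro z ⟨hzG, hzB⟩
      exact ⟨hzG, hBci z hzG hzB⟩
    · rintro z ⟨hzG, hzB⟩
      exact ⟨hzG, fun hB => hzB (subset_closure hB)⟩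
  have hUopen : IsOpen U := by
    rw [hUeq]
    exact hG.inter isClosed_closure.isOpen_compl
  have hx₀Uc : x₀ ∈ Uᶜ := fun h => h.2 (hx₀B rfl)
  have hUc : Uᶜ.Nonempty := ⟨x₀, hx₀Uc⟩
  have hBclU : ∀ p ∈ B, p ∈ closure U := by
    intro p hpB
    rw [Metric.mem_closure_iff]
    intro δ hδ
    have hpG := hBG hpB
    have hσp := hσpos p hpG
    have hopen : IsOpen (Metric.ball p (min δ (σ p / 8)) ∩ G) := isOpen_ball.inter hG
    have hpmem : p ∈ Metric.ball p (min δ (σ p / 8)) ∩ G :=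
      ⟨Metric.mem_ball_self (lt_min hδ (by linarith)), hpG⟩
    have hacc := accPt_iff_nhds.mp
      (PerfectSpace.univ_preperfect p (mem_univ p)) _ (hopen.mem_nhds hpmem)
    obtain ⟨q, ⟨⟨hqb, hqG⟩, -⟩, hqp⟩ := hacc
    have hpq : dist p q < min δ (σ p / 8) := by
      have := Metric.mem_ball.mp hqb; rwa [dist_comm] at this
    refine ⟨q, ⟨hqG, ?_⟩, lt_of_lt_of_le hpq (min_le_left _ _)⟩
    intro hqB
    refine hqp (honept p hpG q hqB p hpB (lt_of_lt_of_le hpq (min_le_right _ _)) ?_)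
    rw [dist_self]
    linarith
  have hclUbd : ∀ p, p ∈ B ∪ (closure G \ G) → p ∈ closure U := by
    rintro p (hp | ⟨h1, h2⟩)
    · exact hBclU p hp
    · rw [Metric.mem_closure_iff]
      intro δ hδ
      obtain ⟨y, hyG, hpy⟩ := Metric.mem_closure_iff.mp h1 (δ/2) (half_pos hδ)
      by_cases hyB : y ∈ B
      · obtain ⟨q, hqU, hyq⟩ := Metric.mem_closure_iff.mp (hBclU y hyB) (δ/2) (half_pos hδ)
        have := dist_triangle p y q
        exact ⟨q, hqU, by linarith⟩
      · exact ⟨y, ⟨hyG, hyB⟩, by linarith⟩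
  have hUcBd : ∀ p, p ∈ B ∪ (closure G \ G) → p ∉ U := by
    rintro p (hp | ⟨h1, h2⟩)
    · exact fun hU => hU.2 hp
    · exact fun hU => h2 (hUsub hU)
  -- the coloured pieces
  set i₀ : I := f 0 with hi₀def
  set Gs : I → Set X := fun i =>
    if i = i₀ then U \ Stmt10Aux.Sel U (fun t => f (Nat.unpair t).2 ≠ i₀)
    else Stmt10Aux.Sel U (fun t => f (Nat.unpair t).2 = i) with hGsdef
  have hTsub : ∀ t, Stmt10Aux.T U t ⊆ U := fun t => Stmt10Aux.T_subset U hUopen h0 t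
  have hTopen : ∀ t, IsOpen (Stmt10Aux.T U t) := fun t => Stmt10Aux.T_open U hUopen h0 t
  have hTdisj : ∀ {s t : ℕ}, s ≠ t →
      Disjoint (Stmt10Aux.T U s) (Stmt10Aux.T U t) := by
    intro s t hst
    rcases lt_or_gt_of_ne hst with h | h
    · exact (Stmt10Aux.T_disj U hUopen h0 h).symm
    · exact Stmt10Aux.T_disj U hUopen h0 h
  have hTGs : ∀ (i : I) (t : ℕ), f (Nat.unpair t).2 = i → Stmt10Aux.T U t ⊆ Gs i := by
    intro i t hit
    by_cases hii : i = i₀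
    · simp only [hGsdef, if_pos hii]
      intro z hz
      refine ⟨hTsub t hz, fun hzSel => ?_⟩
      obtain ⟨t', ht', hzT'⟩ := Stmt10Aux.mem_sel.mp hzSel
      by_cases htt : t = t'
      · subst htt; exact ht' (hit.trans hii)
      · exact Set.disjoint_left.mp (hTdisj htt) hz hzT'
    · simp only [hGsdef, if_neg hii]
      intro z hz
      exact Stmt10Aux.mem_sel.mpr ⟨t, hit, hz⟩
  have hGsU : ∀ i, Gs i ⊆ U := by
    intro i
    simp only [hGsdef]
    by_cases hii : i = i₀
    · rw [if_pos hii]; exact diff_subset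
    · rw [if_neg hii]; exact Stmt10Aux.sel_subset U hUopen h0 _
  have hcling : ∀ (i : I) (p : X), p ∉ U → p ∈ closure U →
      ∀ δ > 0, ∃ z ∈ Gs i, dist p z < δ := by
    intro i p hpU hpcl δ hδ
    obtain ⟨k, hk⟩ := hf i
    obtain ⟨t, ht2, z, hzT, hpz⟩ := Stmt10Aux.cling U hUopen h0 hpU hpcl k hδ
    exact ⟨z, hTGs i t (by rw [ht2, hk]) hzT, hpz⟩
  have hGsne : ∀ i, (Gs i).Nonempty := by
    intro i
    obtain ⟨z, hz, -⟩ := hcling i x₀ hx₀Uc (hBclU x₀ (hx₀B rfl)) 1 one_pos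
    exact ⟨z, hz⟩
  have hGsopen : ∀ i, IsOpen (Gs i) := by
    intro i
    simp only [hGsdef]
    by_cases hii : i = i₀
    · rw [if_pos hii]
      have heq : U \ Stmt10Aux.Sel U (fun t => f (Nat.unpair t).2 ≠ i₀) =
          U ∩ (closure (Stmt10Aux.Sel U (fun t => f (Nat.unpair t).2 ≠ i₀)))ᶜ := by
        apply Subset.antisymm
        · rintro z ⟨hzU, hzS⟩
          refine ⟨hzU, fun hcl => hzS ?_⟩
          exact Stmt10Aux.sel_closure_inter U hUopen h0 hUc _ ⟨hcl, hzU⟩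
        · rintro z ⟨hzU, hzS⟩
          exact ⟨hzU, fun h => hzS (subset_closure h)⟩
      rw [heq]
      exact hUopen.inter isClosed_closure.isOpen_compl
    · rw [if_neg hii]
      exact Stmt10Aux.sel_open U hUopen h0 _
  have hGspair : Pairwise (Function.onFun Disjoint Gs) := by
    intro i j hij
    rw [Function.onFun, Set.disjoint_left]
    intro z hzi hzj
    by_cases hii : i = i₀
    · have hzi' : z ∉ Stmt10Aux.Sel U (fun t => f (Nat.unpair t).2 ≠ i₀) := by
        simp only [hGsdef, if_pos hii] at hzi
        exact hzi.2
      have hjj : j ≠ i₀ := fun h => hij (hii.trans h.symm)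
      simp only [hGsdef, if_neg hjj] at hzj
      obtain ⟨t, ht, hzT⟩ := Stmt10Aux.mem_sel.mp hzj
      exact hzi' (Stmt10Aux.mem_sel.mpr ⟨t, by rw [ht]; exact hjj, hzT⟩)
    · by_cases hjj : j = i₀
      · have hzj' : z ∉ Stmt10Aux.Sel U (fun t => f (Nat.unpair t).2 ≠ i₀) := by
          simp only [hGsdef, if_pos hjj] at hzj
          exact hzj.2
        simp only [hGsdef, if_neg hii] at hzi
        obtain ⟨t, ht, hzT⟩ := Stmt10Aux.mem_sel.mp hzi
        exact hzj' (Stmt10Aux.mem_sel.mpr ⟨t, by rw [ht]; exact hii, hzT⟩)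
      · simp only [hGsdef, if_neg hii] at hzi
        simp only [hGsdef, if_neg hjj] at hzj
        obtain ⟨t, ht, hzT⟩ := Stmt10Aux.mem_sel.mp hzi
        obtain ⟨t', ht', hzT'⟩ := Stmt10Aux.mem_sel.mp hzj
        by_cases htt : t = t'
        · subst htt
          exact hij (ht.symm.trans ht')
        · exact Set.disjoint_left.mp (hTdisj htt) hzT hzT'
  have hUnion : ⋃ i, Gs i = U := by
    apply Subset.antisymm
    · exact iUnion_subset hGsU
    · intro z hzU
      by_cases hzS : z ∈ Stmt10Aux.Sel U (fun t => f (Nat.unpair t).2 ≠ i₀)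
      · obtain ⟨t, ht, hzT⟩ := Stmt10Aux.mem_sel.mp hzS
        exact mem_iUnion.mpr ⟨f (Nat.unpair t).2, hTGs _ t rfl hzT⟩
      · refine mem_iUnion.mpr ⟨i₀, ?_⟩
        simp only [hGsdef, if_pos rfl]
        exact ⟨hzU, hzS⟩
  have hBU : B ∪ ⋃ i, Gs i = G := by
    rw [hUnion, hUdef, Set.union_diff_cancel hBG]
  have hclG : closure G \ ⋃ i, Gs i = closure B := by
    rw [hUnion, hclB]
    ext z
    simp only [mem_diff, mem_union]
    constructor
    · rintro ⟨hzc, hzU⟩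
      by_cases hzG : z ∈ G
      · left
        by_contra hzB
        exact hzU ⟨hzG, hzB⟩
      · right; exact ⟨hzc, hzG⟩
    · rintro (hzB | ⟨h1, h2⟩)
      · exact ⟨subset_closure (hBG hzB), fun h => h.2 hzB⟩
      · exact ⟨h1, fun h => h2 (hUsub h)⟩
  have hGsbd : ∀ i, closure B = closure (Gs i) \ Gs i := by
    intro i
    have hBform : closure B = B ∪ (closure G \ G) := hclB
    apply Subset.antisymm
    · intro p hp
      have hp' : p ∈ B ∪ (closure G \ G) := hBform ▸ hp
      have hpU : p ∉ U := hUcBd p hp'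
      constructor
      · rw [Metric.mem_closure_iff]
        intro δ hδ
        obtain ⟨z, hz, hpz⟩ := hcling i p hpU (hclUbd p hp') δ hδ
        exact ⟨z, hz, hpz⟩
      · exact fun h => hpU (hGsU i h)
    · rintro z ⟨hzc, hzG⟩
      have hzclU : z ∈ closure U := closure_mono (hGsU i) hzc
      have hzclG : z ∈ closure G := closure_mono hUsub hzclU
      by_cases hzGmem : z ∈ G
      · by_cases hzU : z ∈ U
        · exfalso
          by_cases hii : i = i₀
          · have hzS : z ∈ Stmt10Aux.Sel U (fun t => f (Nat.unpair t).2 ≠ i₀) := by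
              by_contra hzS
              exact hzG (by simp only [hGsdef, if_pos hii]; exact ⟨hzU, hzS⟩)
            obtain ⟨t, ht, hzT⟩ := Stmt10Aux.mem_sel.mp hzS
            have hdisj : Stmt10Aux.T U t ∩ Gs i = ∅ := by
              rw [Set.eq_empty_iff_forall_notMem]
              rintro v ⟨hvT, hvG⟩
              have : v ∈ Stmt10Aux.Sel U (fun t => f (Nat.unpair t).2 ≠ i₀) :=
                Stmt10Aux.mem_sel.mpr ⟨t, ht, hvT⟩
              simp only [hGsdef, if_pos hii] at hvG
              exact hvG.2 this
            have hmem : z ∈ closure (Stmt10Aux.T U t ∩ Gs i) :=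
              (hTopen t).inter_closure ⟨hzT, hzc⟩
            rw [hdisj] at hmem
            simpa using hmem
          · have : z ∈ Gs i := by
              have h2 : z ∈ closure (Stmt10Aux.Sel U (fun t => f (Nat.unpair t).2 = i)) := by
                simpa only [hGsdef, if_neg hii] using hzc
              have h3 := Stmt10Aux.sel_closure_inter U hUopen h0 hUc
                (fun t => f (Nat.unpair t).2 = i) ⟨h2, hzU⟩
              simpa only [hGsdef, if_neg hii] using h3
            exact hzG this
        · have hzB : z ∈ B := by
            by_contra h
            exact hzU ⟨hzGmem, h⟩
          exact subset_closure hzB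
      · rw [hBform]
        exact Or.inr ⟨hzclG, hzGmem⟩
  have hBdisj : ∀ i, Disjoint B (Gs i) := by
    intro i
    rw [Set.disjoint_left]
    intro b hb hbG
    exact (hGsU i hbG).2 hb
  exact ⟨B, Gs, hBne, fun i => ⟨hGsopen i, hGsne i⟩, hGspair, hBdisj, hBU, hclG, hGsbd,
    hBd, hinfB⟩

end MainTheorem
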